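/- Let d ≥ 2, γ > -d, and let b : [-1,1] → [0,∞) be measurable with ‖b‖_{L¹(S^{d-1})} < ∞. For every measurable f : ℝ^d → [0,∞] one has the mass conservation identity (as an equality in [0,∞]): ∫_{ℝ^d} ∫_{ℝ^d} ∫_{S^{d-1}} |v-v_*|^γ b(cos θ) f(v') M(v_*') dσ dv_* dv = ∫_{ℝ^d} ∫_{ℝ^d} ∫_{S^{d-1}} |v-v_*|^γ b(cos θ) f(v) M(v_*) dσ dv_* dv; equivalently, the linear Boltzmann operator L f = K_b f - Σ f satisfies ∫_{ℝ^d} L f(v) dv = 0 on its domain. -/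

import Mathlib

open MeasureTheory Real Metric Set Filter ENNReal

noncomputable section

abbrev Euc (d : ℕ) := EuclideanSpace ℝ (Fin d)

/-- The normalized Maxwellian `M(v) = (2π)^{-d/2} exp(-|v|²/2)`. -/
def Maxw (d : ℕ) (v : Euc d) : ℝ := (2 * π) ^ (-(d : ℝ) / 2) * Real.exp (-‖v‖ ^ 2 / 2)

/-- The uniform surface measure on the unit sphere `S^{d-1}` in `ℝ^d`. -/
def sphMeas (d : ℕ) : Measure (sphere (0 : Euc d) 1) := (volume : Measure (Euc d)).toSphere

/-- post-collisional velocity `v' = (v+v_*)/2 + (|v-v_*|/2)σ`. -/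
def colV (d : ℕ) (v w σ : Euc d) : Euc d := (2 : ℝ)⁻¹ • (v + w) + (‖v - w‖ / 2) • σ

/-- post-collisional velocity `v_*' = (v+v_*)/2 - (|v-v_*|/2)σ`. -/
def colW (d : ℕ) (v w σ : Euc d) : Euc d := (2 : ℝ)⁻¹ • (v + w) - (‖v - w‖ / 2) • σ

/-- `cos θ = ⟨(v-v_*)/|v-v_*|, σ⟩`. -/
def cosTh (d : ℕ) (v w σ : Euc d) : ℝ := inner ℝ (‖v - w‖⁻¹ • (v - w)) σ

/-- a fixed unit vector in `ℝ^d` (junk value `0` if `d = 0`). -/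
def unitVec (d : ℕ) : Euc d := if h : 0 < d then EuclideanSpace.single (⟨0, h⟩ : Fin d) 1 else 0

/-- The `L¹(S^{d-1})` norm `∫_{S^{d-1}} b(⟨e,σ⟩) dσ` of an angular kernel `b`. -/
def sphNorm (d : ℕ) (b : ℝ → ℝ) : ℝ :=
  ∫ σ : sphere (0 : Euc d) 1, b (inner ℝ (unitVec d) (σ : Euc d)) ∂(sphMeas d)

/-! ### Auxiliary lemmas -/

lemma maxw_cont (d : ℕ) : Continuous (Maxw d) := by unfold Maxw; fun_prop

/-- Generalized polar coordinates for a lower Lebesgue integral over `ℝ^d`. -/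
lemma polar_lintegral (d : ℕ) (hd : 0 < d) (g : Euc d → ℝ≥0∞) (hg : Measurable g) :
    ∫⁻ u, g u = ∫⁻ ω : sphere (0 : Euc d) 1, ∫⁻ r : Ioi (0 : ℝ),
      g ((r : ℝ) • (ω : Euc d)) ∂(Measure.volumeIoiPow (d - 1)) ∂(sphMeas d) := by
  haveI : Nontrivial (Euc d) :=
    Module.nontrivial_of_finrank_pos (R := ℝ)
      (by rw [finrank_euclideanSpace_fin]; exact hd)
  have hfr : Module.finrank ℝ (Euc d) - 1 = d - 1 := by rw [finrank_euclideanSpace_fin]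
  have hmp := (volume : Measure (Euc d)).measurePreserving_homeomorphUnitSphereProd
  set F : sphere (0 : Euc d) 1 × Ioi (0 : ℝ) → ℝ≥0∞ :=
    fun p => g ((p.2 : ℝ) • (p.1 : Euc d)) with hF
  have hFmeas : Measurable F := by
    apply hg.comp
    exact ((continuous_subtype_val.comp continuous_snd).smul
      (continuous_subtype_val.comp continuous_fst)).measurable
  calc ∫⁻ u, g u = ∫⁻ u in ({0}ᶜ : Set (Euc d)), g u := by
        rw [MeasureTheory.restrict_compl_singleton]
    _ = ∫⁻ x : ({0}ᶜ : Set (Euc d)), g x ∂((volume : Measure (Euc d)).comap (↑)) :=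
        (lintegral_subtype_comap (measurableSet_singleton _).compl _).symm
    _ = ∫⁻ x : ({0}ᶜ : Set (Euc d)), F (homeomorphUnitSphereProd (Euc d) x)
          ∂((volume : Measure (Euc d)).comap (↑)) := by
        refine lintegral_congr fun x => ?_
        have hx : ‖(x : Euc d)‖ ≠ 0 := norm_ne_zero_iff.2 x.2
        simp only [hF, homeomorphUnitSphereProd_apply_fst_coe,
          homeomorphUnitSphereProd_apply_snd_coe, smul_inv_smul₀ hx]
    _ = ∫⁻ p, F p ∂((volume : Measure (Euc d)).toSphere.prod
          (Measure.volumeIoiPow (Module.finrank ℝ (Euc d) - 1))) :=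
        hmp.lintegral_comp hFmeas
    _ = _ := by rw [hfr]; exact lintegral_prod F hFmeas.aemeasurable

/-- Change of variables `(v, w) ↦ (X + u/2, X - u/2)` for iterated lower integrals. -/
lemma shift_lintegral (d : ℕ) (K : Euc d × Euc d → ℝ≥0∞) (hK : Measurable K) :
    ∫⁻ v : Euc d, ∫⁻ w : Euc d, K (v, w)
      = ∫⁻ u : Euc d, ∫⁻ X : Euc d, K (X + (2:ℝ)⁻¹ • u, X - (2:ℝ)⁻¹ • u) := by
  have hvec : ∀ X u : Euc d, X + (2:ℝ)⁻¹ • u - u = X - (2:ℝ)⁻¹ • u := fun X u => by module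
  calc ∫⁻ v : Euc d, ∫⁻ w : Euc d, K (v, w)
      = ∫⁻ v : Euc d, ∫⁻ u : Euc d, K (v, v - u) := by
        refine lintegral_congr fun v => ?_
        exact ((Measure.measurePreserving_sub_left volume v).lintegral_comp
          (hK.comp (measurable_const.prodMk measurable_id))).symm
    _ = ∫⁻ u : Euc d, ∫⁻ v : Euc d, K (v, v - u) := by
        exact lintegral_lintegral_swap
          ((hK.comp (measurable_fst.prodMk (measurable_fst.sub measurable_snd))).aemeasurable)
    _ = ∫⁻ u : Euc d, ∫⁻ X : Euc d, K (X + (2:ℝ)⁻¹ • u, X - (2:ℝ)⁻¹ • u) := by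
        refine lintegral_congr fun u => ?_
        have h := (measurePreserving_add_right volume ((2:ℝ)⁻¹ • u)).lintegral_comp
          (f := fun v => K (v, v - u))
          (hK.comp (measurable_id.prodMk (measurable_id.sub measurable_const)))
        rw [← h]
        exact lintegral_congr fun X => by
          show K (X + (2:ℝ)⁻¹ • u, X + (2:ℝ)⁻¹ • u - u) = _; rw [hvec]

/-- The convolution-type kernel `J(z) = ∫ f(Y) M(Y - z) dY`. -/
def Jfun (d : ℕ) (f : Euc d → ℝ≥0∞) (z : Euc d) : ℝ≥0∞ :=
  ∫⁻ Y : Euc d, f Y * ENNReal.ofReal (Maxw d (Y - z))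

lemma Jfun_meas (d : ℕ) (f : Euc d → ℝ≥0∞) (hf : Measurable f) :
    Measurable (Jfun d f) := by
  apply Measurable.lintegral_prod_right (f := fun z Y => f Y * ENNReal.ofReal (Maxw d (Y - z)))
  exact (hf.comp measurable_snd).mul
    ((((maxw_cont d).measurable).comp (measurable_snd.sub measurable_fst)).ennreal_ofReal)

/-- Evaluation of the inner ℝ (center-of-mass) integral. -/
lemma innerX_lintegral (d : ℕ) (f : Euc d → ℝ≥0∞) (hf : Measurable f) (c : ℝ≥0∞) (a : Euc d) :
    ∫⁻ X : Euc d, c * f (X + a) * ENNReal.ofReal (Maxw d (X - a))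
      = c * Jfun d f ((2:ℝ) • a) := by
  have hv : ∀ X : Euc d, X - a = X + a - (2:ℝ) • a := fun X => by module
  have hmeas : Measurable fun X : Euc d =>
      f (X + a) * ENNReal.ofReal (Maxw d (X + a - (2:ℝ) • a)) := by
    refine ((hf.comp (measurable_id.add_const a)).mul ?_)
    exact (((maxw_cont d).measurable).comp
      ((measurable_id.add_const a).sub_const _)).ennreal_ofReal
  calc ∫⁻ X : Euc d, c * f (X + a) * ENNReal.ofReal (Maxw d (X - a))
      = ∫⁻ X : Euc d, c * (f (X + a) * ENNReal.ofReal (Maxw d (X + a - (2:ℝ) • a))) := by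
        refine lintegral_congr fun X => ?_
        rw [mul_assoc, hv]
    _ = c * ∫⁻ X : Euc d, f (X + a) * ENNReal.ofReal (Maxw d (X + a - (2:ℝ) • a)) :=
        lintegral_const_mul c hmeas
    _ = c * Jfun d f ((2:ℝ) • a) := by
        congr 1
        exact (measurePreserving_add_right volume a).lintegral_comp
          (f := fun Y => f Y * ENNReal.ofReal (Maxw d (Y - (2:ℝ) • a)))
          ((hf.mul (((maxw_cont d).measurable).comp (measurable_id.sub_const _)).ennreal_ofReal))

section Alg

variable {d : ℕ}

lemma shift_sub (X u : Euc d) : (X + (2:ℝ)⁻¹ • u) - (X - (2:ℝ)⁻¹ • u) = u := by module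

lemma colV_shift (X u σ : Euc d) :
    colV d (X + (2:ℝ)⁻¹ • u) (X - (2:ℝ)⁻¹ • u) σ = X + (‖u‖ / 2) • σ := by
  rw [colV, shift_sub]; congr 1; module

lemma colW_shift (X u σ : Euc d) :
    colW d (X + (2:ℝ)⁻¹ • u) (X - (2:ℝ)⁻¹ • u) σ = X - (‖u‖ / 2) • σ := by
  rw [colW, shift_sub]
  have : (2:ℝ)⁻¹ • ((X + (2:ℝ)⁻¹ • u) + (X - (2:ℝ)⁻¹ • u)) = X := by module
  rw [this]

lemma cosTh_shift (X u σ : Euc d) :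
    cosTh d (X + (2:ℝ)⁻¹ • u) (X - (2:ℝ)⁻¹ • u) σ = inner ℝ (‖u‖⁻¹ • u) σ := by
  rw [cosTh, shift_sub]

lemma normsub_shift (X u : Euc d) :
    ‖(X + (2:ℝ)⁻¹ • u) - (X - (2:ℝ)⁻¹ • u)‖ = ‖u‖ := by rw [shift_sub]

end Alg

lemma swap_core (d : ℕ) (γ : ℝ) (b : ℝ → ℝ) (hbmeas : Measurable b)
    (J : Euc d → ℝ≥0∞) (hJ : Measurable J) :
    ∫⁻ ω : sphere (0 : Euc d) 1, ∫⁻ r : Ioi (0 : ℝ), ∫⁻ σ : sphere (0 : Euc d) 1,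
        ENNReal.ofReal ((r : ℝ) ^ γ * b (inner ℝ (ω : Euc d) (σ : Euc d))) *
          J ((r : ℝ) • (σ : Euc d)) ∂(sphMeas d) ∂(Measure.volumeIoiPow (d - 1)) ∂(sphMeas d)
      = ∫⁻ ω : sphere (0 : Euc d) 1, ∫⁻ r : Ioi (0 : ℝ), ∫⁻ σ : sphere (0 : Euc d) 1,
        ENNReal.ofReal ((r : ℝ) ^ γ * b (inner ℝ (ω : Euc d) (σ : Euc d))) *
          J ((r : ℝ) • (ω : Euc d)) ∂(sphMeas d) ∂(Measure.volumeIoiPow (d - 1)) ∂(sphMeas d) := by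
  haveI : SFinite (sphMeas d) := by unfold sphMeas; infer_instance
  have hinner : Measurable fun q : (sphere (0 : Euc d) 1 × sphere (0 : Euc d) 1) × Ioi (0 : ℝ) =>
      (inner ℝ (q.1.1 : Euc d) (q.1.2 : Euc d) : ℝ) :=
    ((continuous_subtype_val.comp (continuous_fst.comp continuous_fst)).inner
      (continuous_subtype_val.comp (continuous_snd.comp continuous_fst))).measurable
  have hq : Measurable fun q : (sphere (0 : Euc d) 1 × sphere (0 : Euc d) 1) × Ioi (0 : ℝ) =>
      ENNReal.ofReal ((q.2 : ℝ) ^ γ * b (inner ℝ (q.1.1 : Euc d) (q.1.2 : Euc d))) :=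
    (((measurable_subtype_coe.comp measurable_snd).pow_const γ).mul
      (hbmeas.comp hinner)).ennreal_ofReal
  have m1 : Measurable fun q : (sphere (0 : Euc d) 1 × sphere (0 : Euc d) 1) × Ioi (0 : ℝ) =>
      ENNReal.ofReal ((q.2 : ℝ) ^ γ * b (inner ℝ (q.1.1 : Euc d) (q.1.2 : Euc d))) *
        J ((q.2 : ℝ) • (q.1.2 : Euc d)) :=
    hq.mul (hJ.comp ((continuous_subtype_val.comp continuous_snd).smul
      (continuous_subtype_val.comp (continuous_snd.comp continuous_fst))).measurable)
  have m2 : Measurable fun q : (sphere (0 : Euc d) 1 × sphere (0 : Euc d) 1) × Ioi (0 : ℝ) =>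
      ENNReal.ofReal ((q.2 : ℝ) ^ γ * b (inner ℝ (q.1.1 : Euc d) (q.1.2 : Euc d))) *
        J ((q.2 : ℝ) • (q.1.1 : Euc d)) :=
    hq.mul (hJ.comp ((continuous_subtype_val.comp continuous_snd).smul
      (continuous_subtype_val.comp (continuous_fst.comp continuous_fst))).measurable)
  calc
    ∫⁻ ω : sphere (0 : Euc d) 1, ∫⁻ r : Ioi (0 : ℝ), ∫⁻ σ : sphere (0 : Euc d) 1,
        ENNReal.ofReal ((r : ℝ) ^ γ * b (inner ℝ (ω : Euc d) (σ : Euc d))) *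
          J ((r : ℝ) • (σ : Euc d)) ∂(sphMeas d) ∂(Measure.volumeIoiPow (d - 1)) ∂(sphMeas d)
      = ∫⁻ ω : sphere (0 : Euc d) 1, ∫⁻ σ : sphere (0 : Euc d) 1, ∫⁻ r : Ioi (0 : ℝ),
          ENNReal.ofReal ((r : ℝ) ^ γ * b (inner ℝ (ω : Euc d) (σ : Euc d))) *
          J ((r : ℝ) • (σ : Euc d)) ∂(Measure.volumeIoiPow (d - 1)) ∂(sphMeas d) ∂(sphMeas d) := by
        refine lintegral_congr fun ω => ?_
        exact lintegral_lintegral_swap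
          ((m1.comp (((measurable_const.prodMk measurable_snd)).prodMk
            measurable_fst)).aemeasurable)
    _ = ∫⁻ σ : sphere (0 : Euc d) 1, ∫⁻ ω : sphere (0 : Euc d) 1, ∫⁻ r : Ioi (0 : ℝ),
          ENNReal.ofReal ((r : ℝ) ^ γ * b (inner ℝ (ω : Euc d) (σ : Euc d))) *
          J ((r : ℝ) • (σ : Euc d)) ∂(Measure.volumeIoiPow (d - 1)) ∂(sphMeas d) ∂(sphMeas d) :=
        lintegral_lintegral_swap (m1.lintegral_prod_right'.aemeasurable)
    _ = ∫⁻ ω : sphere (0 : Euc d) 1, ∫⁻ σ : sphere (0 : Euc d) 1, ∫⁻ r : Ioi (0 : ℝ),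
          ENNReal.ofReal ((r : ℝ) ^ γ * b (inner ℝ (σ : Euc d) (ω : Euc d))) *
          J ((r : ℝ) • (ω : Euc d)) ∂(Measure.volumeIoiPow (d - 1)) ∂(sphMeas d) ∂(sphMeas d) :=
        rfl
    _ = ∫⁻ ω : sphere (0 : Euc d) 1, ∫⁻ σ : sphere (0 : Euc d) 1, ∫⁻ r : Ioi (0 : ℝ),
          ENNReal.ofReal ((r : ℝ) ^ γ * b (inner ℝ (ω : Euc d) (σ : Euc d))) *
          J ((r : ℝ) • (ω : Euc d)) ∂(Measure.volumeIoiPow (d - 1)) ∂(sphMeas d) ∂(sphMeas d) := by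
        refine lintegral_congr fun ω => lintegral_congr fun σ => lintegral_congr fun r => ?_
        rw [real_inner_comm]
    _ = ∫⁻ ω : sphere (0 : Euc d) 1, ∫⁻ r : Ioi (0 : ℝ), ∫⁻ σ : sphere (0 : Euc d) 1,
          ENNReal.ofReal ((r : ℝ) ^ γ * b (inner ℝ (ω : Euc d) (σ : Euc d))) *
          J ((r : ℝ) • (ω : Euc d)) ∂(sphMeas d) ∂(Measure.volumeIoiPow (d - 1)) ∂(sphMeas d) := by
        refine lintegral_congr fun ω => ?_
        exact lintegral_lintegral_swap
          ((m2.comp (((measurable_const.prodMk measurable_fst)).prodMk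
            measurable_snd)).aemeasurable)

/-- Mass conservation: invariance of the collision integral under the pre-post collisional
change of variables. -/
theorem mass_conservation
    (d : ℕ) (hd : 2 ≤ d) (γ : ℝ) (hγ : -(d : ℝ) < γ)
    (b : ℝ → ℝ) (hbmeas : Measurable b) (hbpos : ∀ x, 0 ≤ b x)
    (hbL1 : ∫⁻ σ : sphere (0 : Euc d) 1,
        ENNReal.ofReal (b (inner ℝ (unitVec d) (σ : Euc d))) ∂(sphMeas d) < ⊤) :
    ∀ f : Euc d → ℝ≥0∞, Measurable f →
      ∫⁻ v : Euc d, ∫⁻ w : Euc d, ∫⁻ σ : sphere (0 : Euc d) 1,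
          ENNReal.ofReal (‖v - w‖ ^ γ * b (cosTh d v w (σ : Euc d))) *
            f (colV d v w (σ : Euc d)) *
            ENNReal.ofReal (Maxw d (colW d v w (σ : Euc d))) ∂(sphMeas d)
        = ∫⁻ v : Euc d, ∫⁻ w : Euc d, ∫⁻ σ : sphere (0 : Euc d) 1,
            ENNReal.ofReal (‖v - w‖ ^ γ * b (cosTh d v w (σ : Euc d))) * f v *
              ENNReal.ofReal (Maxw d w) ∂(sphMeas d) := by
  intro f hf
  haveI : SFinite (sphMeas d) := by
    unfold sphMeas; infer_instance
  -- basic measurability facts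
  have hcoe : Measurable fun σ : sphere (0 : Euc d) 1 => (σ : Euc d) :=
    continuous_subtype_val.measurable
  have hJ : Measurable (Jfun d f) := Jfun_meas d f hf
  -- measurability of `c` (jointly in `(u, σ)`)
  have hc : Measurable fun p : Euc d × sphere (0 : Euc d) 1 =>
      ENNReal.ofReal (‖p.1‖ ^ γ * b (inner ℝ (‖p.1‖⁻¹ • p.1) (p.2 : Euc d))) := by
    have h1 : (fun p : Euc d × sphere (0 : Euc d) 1 =>
        (inner ℝ (‖p.1‖⁻¹ • p.1) (p.2 : Euc d) : ℝ))
        = fun p => ‖p.1‖⁻¹ * inner ℝ p.1 (p.2 : Euc d) := by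
      funext p; exact real_inner_smul_left _ _ _
    refine Measurable.ennreal_ofReal ?_
    refine (measurable_fst.norm.pow_const γ).mul (hbmeas.comp ?_)
    rw [h1]
    exact (measurable_fst.norm.inv).mul
      (measurable_fst.inner (hcoe.comp measurable_snd))
  -- the two inner kernels, and their joint measurability
  have hcosm : Measurable fun q : (Euc d × Euc d) × sphere (0 : Euc d) 1 =>
      cosTh d q.1.1 q.1.2 (q.2 : Euc d) := by
    have h1 : (fun q : (Euc d × Euc d) × sphere (0 : Euc d) 1 =>
        cosTh d q.1.1 q.1.2 (q.2 : Euc d))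
        = fun q => ‖q.1.1 - q.1.2‖⁻¹ * inner ℝ (q.1.1 - q.1.2) (q.2 : Euc d) := by
      funext q; exact real_inner_smul_left _ _ _
    rw [h1]
    exact ((measurable_fst.fst.sub measurable_fst.snd).norm.inv).mul
      ((measurable_fst.fst.sub measurable_fst.snd).inner (hcoe.comp measurable_snd))
  have hpref : Measurable fun q : (Euc d × Euc d) × sphere (0 : Euc d) 1 =>
      ENNReal.ofReal (‖q.1.1 - q.1.2‖ ^ γ * b (cosTh d q.1.1 q.1.2 (q.2 : Euc d))) :=
    (((measurable_fst.fst.sub measurable_fst.snd).norm.pow_const γ).mul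
      (hbmeas.comp hcosm)).ennreal_ofReal
  have hcolVc : Continuous fun q : (Euc d × Euc d) × sphere (0 : Euc d) 1 =>
      colV d q.1.1 q.1.2 (q.2 : Euc d) := by unfold colV; fun_prop
  have hcolWc : Continuous fun q : (Euc d × Euc d) × sphere (0 : Euc d) 1 =>
      colW d q.1.1 q.1.2 (q.2 : Euc d) := by unfold colW; fun_prop
  have hI1 : Measurable fun q : (Euc d × Euc d) × sphere (0 : Euc d) 1 =>
      ENNReal.ofReal (‖q.1.1 - q.1.2‖ ^ γ * b (cosTh d q.1.1 q.1.2 (q.2 : Euc d))) *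
        f (colV d q.1.1 q.1.2 (q.2 : Euc d)) *
        ENNReal.ofReal (Maxw d (colW d q.1.1 q.1.2 (q.2 : Euc d))) :=
    (hpref.mul (hf.comp hcolVc.measurable)).mul
      (((maxw_cont d).comp hcolWc).measurable.ennreal_ofReal)
  have hI2 : Measurable fun q : (Euc d × Euc d) × sphere (0 : Euc d) 1 =>
      ENNReal.ofReal (‖q.1.1 - q.1.2‖ ^ γ * b (cosTh d q.1.1 q.1.2 (q.2 : Euc d))) *
        f q.1.1 * ENNReal.ofReal (Maxw d q.1.2) :=
    (hpref.mul (hf.comp measurable_fst.fst)).mul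
      (((maxw_cont d).measurable.comp measurable_fst.snd).ennreal_ofReal)
  have hK1 : Measurable fun p : Euc d × Euc d => ∫⁻ σ : sphere (0 : Euc d) 1,
      ENNReal.ofReal (‖p.1 - p.2‖ ^ γ * b (cosTh d p.1 p.2 (σ : Euc d))) *
        f (colV d p.1 p.2 (σ : Euc d)) *
        ENNReal.ofReal (Maxw d (colW d p.1 p.2 (σ : Euc d))) ∂(sphMeas d) :=
    hI1.lintegral_prod_right'
  have hK2 : Measurable fun p : Euc d × Euc d => ∫⁻ σ : sphere (0 : Euc d) 1,
      ENNReal.ofReal (‖p.1 - p.2‖ ^ γ * b (cosTh d p.1 p.2 (σ : Euc d))) *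
        f p.1 * ENNReal.ofReal (Maxw d p.2) ∂(sphMeas d) :=
    hI2.lintegral_prod_right'
  -- Step 1: reduce both sides to integrals over (u, σ) of c(u,σ) * Jfun(...)
  have hd0 : 0 < d := by omega
  have eL : (∫⁻ v : Euc d, ∫⁻ w : Euc d, ∫⁻ σ : sphere (0 : Euc d) 1,
        ENNReal.ofReal (‖v - w‖ ^ γ * b (cosTh d v w (σ : Euc d))) *
          f (colV d v w (σ : Euc d)) *
          ENNReal.ofReal (Maxw d (colW d v w (σ : Euc d))) ∂(sphMeas d))
      = ∫⁻ u : Euc d, ∫⁻ σ : sphere (0 : Euc d) 1,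
          ENNReal.ofReal (‖u‖ ^ γ * b (inner ℝ (‖u‖⁻¹ • u) (σ : Euc d))) *
            Jfun d f (‖u‖ • (σ : Euc d)) ∂(sphMeas d) := by
    calc (∫⁻ v : Euc d, ∫⁻ w : Euc d, ∫⁻ σ : sphere (0 : Euc d) 1,
        ENNReal.ofReal (‖v - w‖ ^ γ * b (cosTh d v w (σ : Euc d))) *
          f (colV d v w (σ : Euc d)) *
          ENNReal.ofReal (Maxw d (colW d v w (σ : Euc d))) ∂(sphMeas d))
        = ∫⁻ u : Euc d, ∫⁻ X : Euc d, ∫⁻ σ : sphere (0 : Euc d) 1,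
            ENNReal.ofReal (‖(X + (2:ℝ)⁻¹ • u) - (X - (2:ℝ)⁻¹ • u)‖ ^ γ *
                b (cosTh d (X + (2:ℝ)⁻¹ • u) (X - (2:ℝ)⁻¹ • u) (σ : Euc d))) *
              f (colV d (X + (2:ℝ)⁻¹ • u) (X - (2:ℝ)⁻¹ • u) (σ : Euc d)) *
              ENNReal.ofReal (Maxw d (colW d (X + (2:ℝ)⁻¹ • u) (X - (2:ℝ)⁻¹ • u) (σ : Euc d)))
              ∂(sphMeas d) :=
          shift_lintegral d _ hK1
      _ = ∫⁻ u : Euc d, ∫⁻ X : Euc d, ∫⁻ σ : sphere (0 : Euc d) 1,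
            ENNReal.ofReal (‖u‖ ^ γ * b (inner ℝ (‖u‖⁻¹ • u) (σ : Euc d))) *
              f (X + (‖u‖ / 2) • (σ : Euc d)) *
              ENNReal.ofReal (Maxw d (X - (‖u‖ / 2) • (σ : Euc d))) ∂(sphMeas d) := by
          refine lintegral_congr fun u => lintegral_congr fun X => lintegral_congr fun σ => ?_
          rw [colV_shift, colW_shift, cosTh_shift, normsub_shift]
      _ = ∫⁻ u : Euc d, ∫⁻ σ : sphere (0 : Euc d) 1, ∫⁻ X : Euc d,
            ENNReal.ofReal (‖u‖ ^ γ * b (inner ℝ (‖u‖⁻¹ • u) (σ : Euc d))) *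
              f (X + (‖u‖ / 2) • (σ : Euc d)) *
              ENNReal.ofReal (Maxw d (X - (‖u‖ / 2) • (σ : Euc d))) ∂volume ∂(sphMeas d) := by
          refine lintegral_congr fun u => ?_
          refine lintegral_lintegral_swap (Measurable.aemeasurable ?_)
          refine (((hc.comp (measurable_const.prodMk measurable_snd)).mul
            (hf.comp ?_)).mul ?_)
          · exact (measurable_fst.add
              (((hcoe.comp measurable_snd)).const_smul (‖u‖ / 2)))
          · exact (((maxw_cont d).measurable).comp
              (measurable_fst.sub (((hcoe.comp measurable_snd)).const_smul (‖u‖ / 2)))).ennreal_ofReal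
      _ = ∫⁻ u : Euc d, ∫⁻ σ : sphere (0 : Euc d) 1,
            ENNReal.ofReal (‖u‖ ^ γ * b (inner ℝ (‖u‖⁻¹ • u) (σ : Euc d))) *
              Jfun d f (‖u‖ • (σ : Euc d)) ∂(sphMeas d) := by
          refine lintegral_congr fun u => lintegral_congr fun σ => ?_
          refine (innerX_lintegral d f hf _ _).trans ?_
          congr 2
          rw [smul_smul]
          congr 1
          ring
  have eR : (∫⁻ v : Euc d, ∫⁻ w : Euc d, ∫⁻ σ : sphere (0 : Euc d) 1,
        ENNReal.ofReal (‖v - w‖ ^ γ * b (cosTh d v w (σ : Euc d))) * f v *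
          ENNReal.ofReal (Maxw d w) ∂(sphMeas d))
      = ∫⁻ u : Euc d, ∫⁻ σ : sphere (0 : Euc d) 1,
          ENNReal.ofReal (‖u‖ ^ γ * b (inner ℝ (‖u‖⁻¹ • u) (σ : Euc d))) *
            Jfun d f u ∂(sphMeas d) := by
    calc (∫⁻ v : Euc d, ∫⁻ w : Euc d, ∫⁻ σ : sphere (0 : Euc d) 1,
        ENNReal.ofReal (‖v - w‖ ^ γ * b (cosTh d v w (σ : Euc d))) * f v *
          ENNReal.ofReal (Maxw d w) ∂(sphMeas d))
        = ∫⁻ u : Euc d, ∫⁻ X : Euc d, ∫⁻ σ : sphere (0 : Euc d) 1,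
            ENNReal.ofReal (‖(X + (2:ℝ)⁻¹ • u) - (X - (2:ℝ)⁻¹ • u)‖ ^ γ *
                b (cosTh d (X + (2:ℝ)⁻¹ • u) (X - (2:ℝ)⁻¹ • u) (σ : Euc d))) *
              f (X + (2:ℝ)⁻¹ • u) *
              ENNReal.ofReal (Maxw d (X - (2:ℝ)⁻¹ • u)) ∂(sphMeas d) :=
          shift_lintegral d _ hK2
      _ = ∫⁻ u : Euc d, ∫⁻ X : Euc d, ∫⁻ σ : sphere (0 : Euc d) 1,
            ENNReal.ofReal (‖u‖ ^ γ * b (inner ℝ (‖u‖⁻¹ • u) (σ : Euc d))) *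
              f (X + (2:ℝ)⁻¹ • u) *
              ENNReal.ofReal (Maxw d (X - (2:ℝ)⁻¹ • u)) ∂(sphMeas d) := by
          refine lintegral_congr fun u => lintegral_congr fun X => lintegral_congr fun σ => ?_
          rw [cosTh_shift, normsub_shift]
      _ = ∫⁻ u : Euc d, ∫⁻ σ : sphere (0 : Euc d) 1, ∫⁻ X : Euc d,
            ENNReal.ofReal (‖u‖ ^ γ * b (inner ℝ (‖u‖⁻¹ • u) (σ : Euc d))) *
              f (X + (2:ℝ)⁻¹ • u) *
              ENNReal.ofReal (Maxw d (X - (2:ℝ)⁻¹ • u)) ∂volume ∂(sphMeas d) := by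
          refine lintegral_congr fun u => ?_
          refine lintegral_lintegral_swap (Measurable.aemeasurable ?_)
          refine (((hc.comp (measurable_const.prodMk measurable_snd)).mul
            (hf.comp (measurable_fst.add_const _))).mul ?_)
          exact (((maxw_cont d).measurable).comp
            (measurable_fst.sub_const _)).ennreal_ofReal
      _ = ∫⁻ u : Euc d, ∫⁻ σ : sphere (0 : Euc d) 1,
            ENNReal.ofReal (‖u‖ ^ γ * b (inner ℝ (‖u‖⁻¹ • u) (σ : Euc d))) *
              Jfun d f u ∂(sphMeas d) := by
          refine lintegral_congr fun u => lintegral_congr fun σ => ?_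
          refine (innerX_lintegral d f hf _ _).trans ?_
          congr 2
          rw [smul_smul]
          norm_num
  rw [eL, eR]
  -- Step 2: polar coordinates and the ω ↔ σ swap
  have hsm : Measurable fun p : Euc d × sphere (0 : Euc d) 1 => ‖p.1‖ • (p.2 : Euc d) :=
    (continuous_fst.norm.smul (continuous_subtype_val.comp continuous_snd)).measurable
  have hg1 : Measurable fun u : Euc d => ∫⁻ σ : sphere (0 : Euc d) 1,
      ENNReal.ofReal (‖u‖ ^ γ * b (inner ℝ (‖u‖⁻¹ • u) (σ : Euc d))) *
        Jfun d f (‖u‖ • (σ : Euc d)) ∂(sphMeas d) :=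
    Measurable.lintegral_prod_right (hc.mul (hJ.comp hsm))
  have hg2 : Measurable fun u : Euc d => ∫⁻ σ : sphere (0 : Euc d) 1,
      ENNReal.ofReal (‖u‖ ^ γ * b (inner ℝ (‖u‖⁻¹ • u) (σ : Euc d))) *
        Jfun d f u ∂(sphMeas d) :=
    Measurable.lintegral_prod_right (hc.mul (hJ.comp measurable_fst))
  have hns : ∀ (r : Ioi (0 : ℝ)) (ω : sphere (0 : Euc d) 1),
      ‖(r : ℝ) • (ω : Euc d)‖ = (r : ℝ) := fun r ω => by
    rw [norm_smul, Real.norm_eq_abs, abs_of_pos (mem_Ioi.1 r.2),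
      mem_sphere_zero_iff_norm.1 ω.2, mul_one]
  have hus : ∀ (r : Ioi (0 : ℝ)) (ω : sphere (0 : Euc d) 1),
      ‖(r : ℝ) • (ω : Euc d)‖⁻¹ • ((r : ℝ) • (ω : Euc d)) = (ω : Euc d) := fun r ω => by
    rw [hns]
    exact inv_smul_smul₀ (ne_of_gt (mem_Ioi.1 r.2)) _
  calc
    ∫⁻ u : Euc d, ∫⁻ σ : sphere (0 : Euc d) 1,
        ENNReal.ofReal (‖u‖ ^ γ * b (inner ℝ (‖u‖⁻¹ • u) (σ : Euc d))) *
          Jfun d f (‖u‖ • (σ : Euc d)) ∂(sphMeas d)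
      = ∫⁻ ω : sphere (0 : Euc d) 1, ∫⁻ r : Ioi (0 : ℝ), ∫⁻ σ : sphere (0 : Euc d) 1,
          ENNReal.ofReal (‖(r : ℝ) • (ω : Euc d)‖ ^ γ *
              b (inner ℝ (‖(r : ℝ) • (ω : Euc d)‖⁻¹ • ((r : ℝ) • (ω : Euc d))) (σ : Euc d))) *
            Jfun d f (‖(r : ℝ) • (ω : Euc d)‖ • (σ : Euc d))
            ∂(sphMeas d) ∂(Measure.volumeIoiPow (d - 1)) ∂(sphMeas d) :=
        polar_lintegral d hd0 _ hg1
    _ = ∫⁻ ω : sphere (0 : Euc d) 1, ∫⁻ r : Ioi (0 : ℝ), ∫⁻ σ : sphere (0 : Euc d) 1,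
          ENNReal.ofReal ((r : ℝ) ^ γ * b (inner ℝ (ω : Euc d) (σ : Euc d))) *
            Jfun d f ((r : ℝ) • (σ : Euc d))
            ∂(sphMeas d) ∂(Measure.volumeIoiPow (d - 1)) ∂(sphMeas d) := by
        refine lintegral_congr fun ω => lintegral_congr fun r => lintegral_congr fun σ => ?_
        rw [hus, hns]
    _ = ∫⁻ ω : sphere (0 : Euc d) 1, ∫⁻ r : Ioi (0 : ℝ), ∫⁻ σ : sphere (0 : Euc d) 1,
          ENNReal.ofReal ((r : ℝ) ^ γ * b (inner ℝ (ω : Euc d) (σ : Euc d))) *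
            Jfun d f ((r : ℝ) • (ω : Euc d))
            ∂(sphMeas d) ∂(Measure.volumeIoiPow (d - 1)) ∂(sphMeas d) :=
        swap_core d γ b hbmeas (Jfun d f) hJ
    _ = ∫⁻ ω : sphere (0 : Euc d) 1, ∫⁻ r : Ioi (0 : ℝ), ∫⁻ σ : sphere (0 : Euc d) 1,
          ENNReal.ofReal (‖(r : ℝ) • (ω : Euc d)‖ ^ γ *
              b (inner ℝ (‖(r : ℝ) • (ω : Euc d)‖⁻¹ • ((r : ℝ) • (ω : Euc d))) (σ : Euc d))) *
            Jfun d f ((r : ℝ) • (ω : Euc d))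
            ∂(sphMeas d) ∂(Measure.volumeIoiPow (d - 1)) ∂(sphMeas d) := by
        refine lintegral_congr fun ω => lintegral_congr fun r => lintegral_congr fun σ => ?_
        rw [hus, hns]
    _ = ∫⁻ u : Euc d, ∫⁻ σ : sphere (0 : Euc d) 1,
          ENNReal.ofReal (‖u‖ ^ γ * b (inner ℝ (‖u‖⁻¹ • u) (σ : Euc d))) *
            Jfun d f u ∂(sphMeas d) := by
        refine (polar_lintegral d hd0 _ hg2).symm

end
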